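/- Let Γ be a group with center Z(Γ). Suppose that the quotient group Γ/Z(Γ) (i) has Grossman's Property A, (ii) has trivial center, and (iii) is generated by a set of elements each of whose centralizer in Γ/Z(Γ) is a cyclic subgroup. Then Γ has Grossman's Property A. -/
import Mathlib

/-- A group `G` has Grossman's Property A if every class-preserving automorphism
(i.e. one sending each element to a conjugate of itself) is inner. -/
def HasPropertyA (G : Type*) [Group G] : Prop :=
  ∀ φ : G ≃* G, (∀ g : G, IsConj g (φ g)) → ∃ h : G, ∀ g : G, φ g = h * g * h⁻¹

theorem propertyA_of_central_quotient (Γ : Type*) [Group Γ]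
    (hA : HasPropertyA (Γ ⧸ Subgroup.center Γ))
    (hZ : Subgroup.center (Γ ⧸ Subgroup.center Γ) = ⊥)
    (S : Set (Γ ⧸ Subgroup.center Γ))
    (hgen : Subgroup.closure S = ⊤)
    (hcyc : ∀ s ∈ S, IsCyclic ↥(Subgroup.centralizer ({s} : Set (Γ ⧸ Subgroup.center Γ)))) :
    HasPropertyA Γ := by
  classical
  intro φ hconj
  -- the center is fixed (setwise) by φ
  have hmap : (Subgroup.center Γ).map (φ : Γ →* Γ) = Subgroup.center Γ :=
    Subgroup.characteristic_iff_map_eq.mp (by infer_instance) φ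
  -- the induced automorphism on the quotient
  set φbar : (Γ ⧸ Subgroup.center Γ) ≃* (Γ ⧸ Subgroup.center Γ) :=
    QuotientGroup.congr (Subgroup.center Γ) (Subgroup.center Γ) φ hmap with hφbar
  have hbar_mk : ∀ g : Γ, φbar (QuotientGroup.mk g) = QuotientGroup.mk (φ g) := fun g =>
    QuotientGroup.congr_mk (Subgroup.center Γ) (Subgroup.center Γ) φ hmap g
  -- it is class preserving
  have hbarconj : ∀ q : Γ ⧸ Subgroup.center Γ, IsConj q (φbar q) := by
    intro q
    induction q using QuotientGroup.induction_on with
    | _ g =>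
      obtain ⟨c, hc⟩ := isConj_iff.mp (hconj g)
      refine isConj_iff.mpr ⟨QuotientGroup.mk c, ?_⟩
      rw [hbar_mk, ← hc]
      simp
  obtain ⟨hbarq, hh⟩ := hA φbar hbarconj
  obtain ⟨h, rfl⟩ := QuotientGroup.mk_surjective hbarq
  -- key identity in the quotient
  have hpsi : ∀ g : Γ, (QuotientGroup.mk (φ g) : Γ ⧸ Subgroup.center Γ) =
      QuotientGroup.mk h * QuotientGroup.mk g * (QuotientGroup.mk h)⁻¹ := by
    intro g
    rw [← hbar_mk]
    exact hh (QuotientGroup.mk g)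
  -- the subgroup of elements where φ is conjugation by h
  set K : Subgroup Γ :=
    { carrier := {g | φ g = h * g * h⁻¹}
      one_mem' := by simp
      mul_mem' := by
        intro a b ha hb
        simp only [Set.mem_setOf_eq, map_mul] at *
        rw [ha, hb]; group
      inv_mem' := by
        intro a ha
        simp only [Set.mem_setOf_eq, map_inv] at *
        rw [ha]; group } with hK
  have hmemK : ∀ g : Γ, g ∈ K ↔ φ g = h * g * h⁻¹ := fun g => Iff.rfl
  -- φ fixes central elements
  have hfix : ∀ z ∈ Subgroup.center Γ, φ z = z := by
    intro z hz
    obtain ⟨c, hc⟩ := isConj_iff.mp (hconj z)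
    rw [← hc, Subgroup.mem_center_iff.mp hz c, mul_inv_cancel_right]
  -- the center is contained in K
  have hZK : Subgroup.center Γ ≤ K := by
    intro z hz
    rw [hmemK, hfix z hz, Subgroup.mem_center_iff.mp hz h, mul_inv_cancel_right]
  -- every generator has a lift in K
  have hgenK : ∀ s ∈ S, ∃ g : Γ, g ∈ K ∧ QuotientGroup.mk g = s := by
    intro s hs
    obtain ⟨g, hg⟩ := QuotientGroup.mk_surjective s
    obtain ⟨c, hc⟩ := isConj_iff.mp (hconj g)
    set x : Γ := h⁻¹ * c with hx
    -- mk x centralizes s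
    have hxs : (QuotientGroup.mk x : Γ ⧸ Subgroup.center Γ) ∈
        Subgroup.centralizer ({s} : Set (Γ ⧸ Subgroup.center Γ)) := by
      rw [Subgroup.mem_centralizer_singleton_iff]
      have h1 : (QuotientGroup.mk (φ g) : Γ ⧸ Subgroup.center Γ) =
          QuotientGroup.mk c * QuotientGroup.mk g * (QuotientGroup.mk c)⁻¹ := by
        rw [← hc]; simp
      have h2 := hpsi g
      rw [h1] at h2
      rw [← hg, hx]
      simp only [QuotientGroup.mk_mul, QuotientGroup.mk_inv]
      set a := (QuotientGroup.mk c : Γ ⧸ Subgroup.center Γ)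
      set b := (QuotientGroup.mk g : Γ ⧸ Subgroup.center Γ)
      set d := (QuotientGroup.mk h : Γ ⧸ Subgroup.center Γ)
      -- h2 : a * b * a⁻¹ = d * b * d⁻¹
      have w : (d⁻¹ * a) * b * (d⁻¹ * a)⁻¹ = b := by
        rw [show (d⁻¹ * a) * b * (d⁻¹ * a)⁻¹ = d⁻¹ * (a * b * a⁻¹) * d by group, h2]
        group
      exact mul_inv_eq_iff_eq_mul.mp w
    have hsC : s ∈ Subgroup.centralizer ({s} : Set (Γ ⧸ Subgroup.center Γ)) := by
      rw [Subgroup.mem_centralizer_singleton_iff]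
    obtain ⟨gen, hgen'⟩ := (hcyc s hs).exists_generator
    obtain ⟨k, hk⟩ := Subgroup.mem_zpowers_iff.mp (hgen' ⟨s, hsC⟩)
    obtain ⟨m, hm⟩ := Subgroup.mem_zpowers_iff.mp (hgen' ⟨QuotientGroup.mk x, hxs⟩)
    have hk' : ((gen : Γ ⧸ Subgroup.center Γ)) ^ k = s := by
      have := congrArg Subtype.val hk
      simpa using this
    have hm' : ((gen : Γ ⧸ Subgroup.center Γ)) ^ m = QuotientGroup.mk x := by
      have := congrArg Subtype.val hm
      simpa using this
    obtain ⟨y, hy⟩ := QuotientGroup.mk_surjective (gen : Γ ⧸ Subgroup.center Γ)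
    -- g = y^k * z₂ and x = y^m * z₁ with z₁ z₂ central
    have hgz : (y ^ k)⁻¹ * g ∈ Subgroup.center Γ := by
      rw [← QuotientGroup.eq, QuotientGroup.mk_zpow, hy, hk', hg]
    have hxz : (y ^ m)⁻¹ * x ∈ Subgroup.center Γ := by
      rw [← QuotientGroup.eq, QuotientGroup.mk_zpow, hy, hm']
    set z₂ : Γ := (y ^ k)⁻¹ * g with hz₂
    set z₁ : Γ := (y ^ m)⁻¹ * x with hz₁
    have e2 : g = y ^ k * z₂ := by rw [hz₂]; group
    have e1 : x = y ^ m * z₁ := by rw [hz₁]; group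
    have cz1 : ∀ a : Γ, Commute z₁ a := fun a =>
      (Subgroup.mem_center_iff.mp hxz a).symm
    have cz2 : ∀ a : Γ, Commute z₂ a := fun a =>
      (Subgroup.mem_center_iff.mp hgz a).symm
    have cx : Commute x g := by
      rw [e1, e2]
      exact Commute.mul_left
        (Commute.mul_right ((Commute.refl y).zpow_zpow m k) (cz2 (y ^ m)).symm)
        (Commute.mul_right (cz1 (y ^ k)) (cz1 z₂))
    have key : x * g * x⁻¹ = g := by rw [cx.eq, mul_inv_cancel_right]
    refine ⟨g, ?_, hg⟩
    rw [hmemK]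
    calc φ g = c * g * c⁻¹ := hc.symm
      _ = h * (x * g * x⁻¹) * h⁻¹ := by rw [hx]; group
      _ = h * g * h⁻¹ := by rw [key]
  -- conclude K = ⊤
  have hKtop : ∀ g : Γ, g ∈ K := by
    have hSsub : S ⊆ ↑(K.map (QuotientGroup.mk' (Subgroup.center Γ))) := by
      intro s hs
      obtain ⟨g, hgK, hg⟩ := hgenK s hs
      exact ⟨g, hgK, hg⟩
    have hle : Subgroup.closure S ≤ K.map (QuotientGroup.mk' (Subgroup.center Γ)) :=
      (Subgroup.closure_le _).mpr hSsub
    rw [hgen] at hle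
    intro g
    obtain ⟨kel, hkel, hkg⟩ := hle (Subgroup.mem_top (QuotientGroup.mk g))
    have hz : kel⁻¹ * g ∈ Subgroup.center Γ := by
      rw [← QuotientGroup.eq]
      exact hkg
    have hg' : g = kel * (kel⁻¹ * g) := by group
    rw [hg']
    exact K.mul_mem hkel (hZK hz)
  exact ⟨h, fun g => (hmemK g).mp (hKtop g)⟩
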